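/- Let D₁ and D₂ be t-structures on a triangulated category D with D₁^{≤0} ⊆ D₂^{≤0}. Then for every object X, the truncations satisfy (τ₂^{≤0} X)₁^{≥1} ≅ (τ₁^{≥1} X)₂^{≤0}, i.e., the truncation functors τ₁^{≥1} and τ₂^{≤0} commute up to natural isomorphism. -/

import Mathlib

open CategoryTheory Category Limits Pretriangulated Triangulated

variable {C : Type*} [Category C] [Preadditive C] [HasZeroObject C] [HasShift C ℤ]
  [∀ (n : ℤ), (shiftFunctor C n).Additive] [Pretriangulated C] [IsTriangulated C]

set_option linter.unusedSectionVars false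

/-- Cancellation: if `A → X → B` is a truncation triangle (`B ≥ 1`) and `W ≤ 0`,
any `c : W ⟶ A` with `c ≫ f = 0` vanishes. -/
lemma aux_cancel_left (t : TStructure C) {X A B : C} (hB : t.ge 1 B)
    (f : A ⟶ X) (g : X ⟶ B) (h : B ⟶ A⟦(1 : ℤ)⟧)
    (hT : Triangle.mk f g h ∈ distTriang C)
    {W : C} (hW : t.le 0 W) (c : W ⟶ A) (hc : c ≫ f = 0) : c = 0 := by
  obtain ⟨e, he⟩ := Triangle.coyoneda_exact₂ _ (inv_rot_of_distTriang _ hT) c hc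
  have he0 : e = 0 := t.zero' e hW
    (t.ge_antitone (by omega : (1:ℤ) ≤ 2) _ (t.ge_shift 1 (-1) 2 (by omega) B hB))
  rw [he, he0]; exact zero_comp

lemma aux_cancel_right (t : TStructure C) {X A B : C} (hA : t.le 0 A)
    (f : A ⟶ X) (g : X ⟶ B) (h : B ⟶ A⟦(1 : ℤ)⟧)
    (hT : Triangle.mk f g h ∈ distTriang C)
    {W : C} (hW : t.ge 1 W) (c : B ⟶ W) (hc : g ≫ c = 0) : c = 0 := by
  obtain ⟨e, he⟩ := Triangle.yoneda_exact₃ _ hT c hc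
  have he0 : e = 0 := t.zero' e
    (t.le_monotone (by omega : (-1:ℤ) ≤ 0) _ (t.le_shift 0 1 (-1) (by omega) A hA)) hW
  rw [he, he0]; exact comp_zero

/-- If every map from a `≤ 0` object to `Y` vanishes, then `Y ≥ 1`. -/
lemma aux_ge_one (t : TStructure C) {Y : C}
    (hY : ∀ {W : C}, t.le 0 W → ∀ (c : W ⟶ Y), c = 0) : t.ge 1 Y := by
  obtain ⟨Ay, By, hAy, hBy, fy, gy, hy, memy⟩ := t.exists_triangle_zero_one Y
  have h1 : (𝟙 Ay) = 0 :=
    aux_cancel_left t hBy fy gy hy memy hAy (𝟙 Ay) (by rw [id_comp, hY hAy fy])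
  have hz : IsZero Ay := by rwa [IsZero.iff_id_eq_zero]
  have : IsIso gy := (Triangle.isZero₁_iff_isIso₂ _ memy).1 hz
  exact (t.ge 1).prop_of_iso (asIso gy).symm hBy

/-- If every map from `Y` to a `≥ 1` object vanishes, then `Y ≤ 0`. -/
lemma aux_le_zero (t : TStructure C) {Y : C}
    (hY : ∀ {W : C}, t.ge 1 W → ∀ (c : Y ⟶ W), c = 0) : t.le 0 Y := by
  obtain ⟨Ay, By, hAy, hBy, fy, gy, hy, memy⟩ := t.exists_triangle_zero_one Y
  have h1 : (𝟙 By) = 0 :=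
    aux_cancel_right t hAy fy gy hy memy hBy (𝟙 By) (by rw [comp_id, hY hBy gy])
  have hz : IsZero By := by rwa [IsZero.iff_id_eq_zero]
  have : IsIso fy := (Triangle.isZero₃_iff_isIso₁ _ memy).1 hz
  exact (t.le 0).prop_of_iso (asIso fy) hAy

/-- Uniqueness of truncation triangles. -/
lemma aux_trunc_uniq (t : TStructure C) {X A B A₂ B₂ : C}
    (hA : t.le 0 A) (hB : t.ge 1 B) (hA₂ : t.le 0 A₂) (hB₂ : t.ge 1 B₂)
    (f : A ⟶ X) (g : X ⟶ B) (h : B ⟶ A⟦(1 : ℤ)⟧)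
    (hT : Triangle.mk f g h ∈ distTriang C)
    (f₂ : A₂ ⟶ X) (g₂ : X ⟶ B₂) (h₂ : B₂ ⟶ A₂⟦(1 : ℤ)⟧)
    (hT₂ : Triangle.mk f₂ g₂ h₂ ∈ distTriang C) :
    Nonempty (Triangle.mk f g h ≅ Triangle.mk f₂ g₂ h₂) := by
  obtain ⟨a, ha⟩ := Triangle.coyoneda_exact₂ _ hT₂ f (t.zero' (f ≫ g₂) hA hB₂)
  obtain ⟨b, hb⟩ := Triangle.coyoneda_exact₂ _ hT f₂ (t.zero' (f₂ ≫ g) hA₂ hB)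
  change A ⟶ A₂ at a
  change A₂ ⟶ A at b
  dsimp only [Triangle.mk] at ha hb
  have h1 : a ≫ b = 𝟙 A := by
    have := aux_cancel_left t hB f g h hT hA (a ≫ b - 𝟙 A)
      (by rw [Preadditive.sub_comp, assoc, ← hb, ← ha, id_comp, sub_self])
    rwa [sub_eq_zero] at this
  have h2 : b ≫ a = 𝟙 A₂ := by
    have := aux_cancel_left t hB₂ f₂ g₂ h₂ hT₂ hA₂ (b ≫ a - 𝟙 A₂)
      (by rw [Preadditive.sub_comp, assoc, ← ha, ← hb, id_comp, sub_self])
    rwa [sub_eq_zero] at this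
  exact ⟨isoTriangleOfIso₁₂ _ _ hT hT₂ ⟨a, b, h1, h2⟩ (Iso.refl X)
    (by exact (comp_id f).trans ha)⟩


/-- For t-structures `t₁`, `t₂` with `D₁^{≤0} ⊆ D₂^{≤0}`, one has
`(τ₂^{≤0} X)₁^{≥1} ≅ (τ₁^{≥1} X)₂^{≤0}` for every object `X`.  Truncations are
encoded by their canonical distinguished triangles. -/
theorem stmt_2 (t₁ t₂ : TStructure C) (ht : t₁.le 0 ≤ t₂.le 0) (X : C)
    -- the D₂-canonical triangle of X : A = τ₂^{≤0} X
    (A B : C) (hA : t₂.le 0 A) (hB : t₂.ge 1 B)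
    (f : A ⟶ X) (g : X ⟶ B) (h : B ⟶ A⟦(1 : ℤ)⟧)
    (hT : Triangle.mk f g h ∈ distTriang C)
    -- the D₁-canonical triangle of A : P = (τ₂^{≤0} X)₁^{≥1}
    (A' P : C) (hA' : t₁.le 0 A') (hP : t₁.ge 1 P)
    (f' : A' ⟶ A) (g' : A ⟶ P) (h' : P ⟶ A'⟦(1 : ℤ)⟧)
    (hT' : Triangle.mk f' g' h' ∈ distTriang C)
    -- the D₁-canonical triangle of X : B' = τ₁^{≥1} X
    (A'' B' : C) (hA'' : t₁.le 0 A'') (hB' : t₁.ge 1 B')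
    (f'' : A'' ⟶ X) (g'' : X ⟶ B') (h'' : B' ⟶ A''⟦(1 : ℤ)⟧)
    (hT'' : Triangle.mk f'' g'' h'' ∈ distTriang C)
    -- the D₂-canonical triangle of B' : Q = (τ₁^{≥1} X)₂^{≤0}
    (Q R : C) (hQ : t₂.le 0 Q) (hR : t₂.ge 1 R)
    (f''' : Q ⟶ B') (g''' : B' ⟶ R) (h''' : R ⟶ Q⟦(1 : ℤ)⟧)
    (hT''' : Triangle.mk f''' g''' h''' ∈ distTriang C) :
    Nonempty (P ≅ Q) := by
  -- `B ∈ D₂^{≥1} ⊆ D₁^{≥1}`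
  have hB1 : t₁.ge 1 B := aux_ge_one t₁ (fun hW c => t₂.zero' c (ht _ hW) hB)
  -- octahedron on `A' ⟶ A ⟶ X`
  obtain ⟨Y, pY, wY, hTY⟩ := Pretriangulated.distinguished_cocone_triangle (f' ≫ f)
  have H := Triangulated.someOctahedron rfl hT' hT hTY
  -- `Y` is an extension of `B` by `P`, hence in `D₁^{≥1}`
  have hY1 : t₁.ge 1 Y := by
    apply aux_ge_one t₁
    intro W hW c
    obtain ⟨e, he⟩ := Triangle.coyoneda_exact₂ _ H.mem c (t₁.zero' (c ≫ H.m₃) hW hB1)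
    rw [he, t₁.zero' e hW hP]; exact zero_comp
  -- so `A' ⟶ X ⟶ Y` is a `t₁`-truncation triangle of `X`; compare with `A'' ⟶ X ⟶ B'`
  obtain ⟨e⟩ := aux_trunc_uniq t₁ hA' hY1 hA'' hB' (f' ≫ f) pY wY hTY f'' g'' h'' hT''
  let e₃ : Y ≅ B' := Triangle.π₃.mapIso e
  -- transport the triangle `P ⟶ Y ⟶ B` along `e₃`
  have hTnew : Triangle.mk (H.m₁ ≫ e₃.hom) (e₃.inv ≫ H.m₃) (h ≫ g'⟦(1 : ℤ)⟧') ∈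
      distTriang C := by
    refine isomorphic_distinguished _ H.mem _ ?_
    exact Triangle.isoMk _ _ (Iso.refl _) e₃.symm (Iso.refl _)
      (by change (H.m₁ ≫ e₃.hom) ≫ e₃.inv = 𝟙 P ≫ H.m₁; rw [assoc, e₃.hom_inv_id, comp_id, id_comp])
        (by change (e₃.inv ≫ H.m₃) ≫ 𝟙 B = e₃.inv ≫ H.m₃; rw [comp_id])
        (by change (h ≫ g'⟦(1 : ℤ)⟧') ≫ (𝟙 P)⟦(1 : ℤ)⟧' = 𝟙 B ≫ h ≫ g'⟦(1 : ℤ)⟧'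
            rw [CategoryTheory.Functor.map_id, comp_id, id_comp])
  -- `P ∈ D₂^{≤0}` as an extension of `A'⟦1⟧` by `A`
  have hP2 : t₂.le 0 P := by
    apply aux_le_zero t₂
    intro W hW c
    obtain ⟨e', he'⟩ := Triangle.yoneda_exact₂ _ (rot_of_distTriang _ hT') c
      (t₂.zero' (g' ≫ c) hA hW)
    have : e' = 0 := t₂.zero' e'
      (ht _ (t₁.le_monotone (by omega : (-1:ℤ) ≤ 0) _ (t₁.le_shift 0 1 (-1) (by omega) A' hA')))
      hW
    rw [he', this]; exact comp_zero
  -- `P ⟶ B' ⟶ B` and `Q ⟶ B' ⟶ R` are both `t₂`-truncation triangles of `B'`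
  obtain ⟨e'⟩ := aux_trunc_uniq t₂ hP2 hB hQ hR (H.m₁ ≫ e₃.hom) (e₃.inv ≫ H.m₃)
    (h ≫ g'⟦(1 : ℤ)⟧') hTnew f''' g''' h''' hT'''
  exact ⟨Triangle.π₁.mapIso e'⟩
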